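/- Let n ≥ 2 be an integer and let x₁ ≥ x₂ ≥ … ≥ xₙ be real numbers. Set x̄ = (1/n)·Σ_{i=1}^n xᵢ and, for 1 ≤ j ≤ n, x_{1,j} = (1/j)·Σ_{i=1}^{j} xᵢ. Then the sequence j ↦ x_{1,j} is nonincreasing in j, and for every real r ≥ 1 and every 1 ≤ j ≤ n−1, x_{1,j} ≤ x̄ + ( (1/n)·Σ_{i=1}^n |xᵢ − x̄|^{2r} / ( j/n + (j/n)^{2r}·(1 − j/n)^{1−2r} ) )^{1/(2r)}. -/

import Mathlib

open Finset Real

/-- Power-mean key lemma: card • (|avg|)^p ≤ sum of |y|^p. -/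
lemma pm_key (s : Finset ℕ) (y : ℕ → ℝ) (p : ℝ) (hp : 1 ≤ p) (hs : s.Nonempty) :
    (s.card : ℝ) * (|∑ i ∈ s, y i| / s.card) ^ p ≤ ∑ i ∈ s, |y i| ^ p := by
  have hm : (0 : ℝ) < s.card := by
    exact_mod_cast Finset.card_pos.mpr hs
  have h1 : |∑ i ∈ s, y i| ≤ ∑ i ∈ s, |y i| := Finset.abs_sum_le_sum_abs _ _
  have h2 : (|∑ i ∈ s, y i| / s.card) ^ p ≤ ((∑ i ∈ s, |y i|) / s.card) ^ p := by
    apply Real.rpow_le_rpow (by positivity) (by gcongr) (by linarith)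
  have h3 : ((∑ i ∈ s, (1/(s.card:ℝ)) * |y i|)) ^ p ≤
      ∑ i ∈ s, (1/(s.card:ℝ)) * |y i| ^ p := by
    apply Real.rpow_arith_mean_le_arith_mean_rpow s _ _
      (fun i _ => by positivity)
      (by rw [Finset.sum_const, nsmul_eq_mul]; field_simp)
      (fun i _ => abs_nonneg _) hp
  simp only [← Finset.mul_sum] at h3
  have h4 : ((∑ i ∈ s, |y i|) / s.card) ^ p = ((1/(s.card:ℝ)) * ∑ i ∈ s, |y i|) ^ p := by
    rw [one_div, inv_mul_eq_div]
  calc (s.card : ℝ) * (|∑ i ∈ s, y i| / s.card) ^ p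
      ≤ (s.card : ℝ) * ((∑ i ∈ s, |y i|) / s.card) ^ p :=
        mul_le_mul_of_nonneg_left h2 hm.le
    _ ≤ (s.card : ℝ) * ((1/(s.card:ℝ)) * ∑ i ∈ s, |y i| ^ p) := by
        rw [h4]; exact mul_le_mul_of_nonneg_left h3 hm.le
    _ = ∑ i ∈ s, |y i| ^ p := by field_simp

theorem stmt_8 (n : ℕ) (hn : 2 ≤ n) (x : ℕ → ℝ)
    (hmono : ∀ i, 1 ≤ i → i ≤ n - 1 → x (i + 1) ≤ x i)
    (xbar : ℝ) (hxbar : xbar = (1 / n) * ∑ i ∈ Finset.Icc 1 n, x i) :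
    (∀ j, 1 ≤ j → j ≤ n - 1 →
      (1 / (j + 1 : ℝ)) * ∑ i ∈ Finset.Icc 1 (j + 1), x i ≤
        (1 / (j : ℝ)) * ∑ i ∈ Finset.Icc 1 j, x i) ∧
    (∀ r : ℝ, 1 ≤ r → ∀ j, 1 ≤ j → j ≤ n - 1 →
      (1 / (j : ℝ)) * ∑ i ∈ Finset.Icc 1 j, x i ≤
        xbar + (((1 / n) * ∑ i ∈ Finset.Icc 1 n, |x i - xbar| ^ (2*r)) /
          ((j / n : ℝ) + ((j / n : ℝ)) ^ (2*r) * (1 - (j / n : ℝ)) ^ (1 - 2*r)))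
            ^ (1/(2*r))) := by
  have chain : ∀ k, k ≤ n → ∀ i, 1 ≤ i → i ≤ k → x k ≤ x i := by
    intro k
    induction k with
    | zero => intro _ i h1 h0; omega
    | succ m ih =>
      intro hk i h1 him
      rcases eq_or_lt_of_le him with he | hl
      · rw [he]
      · have hi : i ≤ m := by omega
        have hm1 : 1 ≤ m := by omega
        calc x (m+1) ≤ x m := hmono m hm1 (by omega)
          _ ≤ x i := ih (by omega) i h1 hi
  constructor
  · -- part 1
    intro j hj hjn
    have hjn' : j + 1 ≤ n := by omega
    have hS : (j : ℝ) * x (j+1) ≤ ∑ i ∈ Finset.Icc 1 j, x i := by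
      have : ∀ i ∈ Finset.Icc 1 j, x (j+1) ≤ x i := by
        intro i hi
        simp only [Finset.mem_Icc] at hi
        exact chain (j+1) hjn' i hi.1 (by omega)
      calc (j : ℝ) * x (j+1) = ∑ _i ∈ Finset.Icc 1 j, x (j+1) := by
            rw [Finset.sum_const, Nat.card_Icc]; simp [nsmul_eq_mul]
        _ ≤ ∑ i ∈ Finset.Icc 1 j, x i := Finset.sum_le_sum this
    have hsum : ∑ i ∈ Finset.Icc 1 (j+1), x i = (∑ i ∈ Finset.Icc 1 j, x i) + x (j+1) := by
      rw [← Finset.sum_Icc_succ_top (by omega : 1 ≤ j + 1)]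
    have hjpos : (0:ℝ) < j := by exact_mod_cast hj
    rw [hsum, one_div, one_div, inv_mul_eq_div, inv_mul_eq_div,
      div_le_div_iff₀ (by positivity) hjpos]
    nlinarith [hS]
  · -- part 2
    intro r hr j hj hjn
    have hjn' : j < n := by omega
    have hnpos : (0:ℝ) < n := by positivity
    have hjpos : (0:ℝ) < j := by exact_mod_cast hj
    have hjltn : (j:ℝ) < n := by exact_mod_cast hjn'
    have hnj : (0:ℝ) < (n:ℝ) - j := by linarith
    have hp : (1:ℝ) ≤ 2 * r := by linarith
    have hppos : (0:ℝ) < 2 * r := by linarith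
    set y : ℕ → ℝ := fun i => x i - xbar with hy
    set d : ℝ := (1 / (j : ℝ)) * ∑ i ∈ Finset.Icc 1 j, x i - xbar with hd
    set A : ℝ := (1 / (n:ℝ)) * ∑ i ∈ Finset.Icc 1 n, |x i - xbar| ^ (2*r) with hA
    set D : ℝ := ((j:ℝ) / n) + ((j:ℝ) / n) ^ (2*r) * (1 - (j:ℝ) / n) ^ (1 - 2*r) with hD
    have hDpos : 0 < D := by
      have h1 : (0:ℝ) < (j:ℝ)/n := by positivity
      have h2 : (0:ℝ) < 1 - (j:ℝ)/n := by
        rw [sub_pos, div_lt_one hnpos]; exact hjltn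
      have := Real.rpow_pos_of_pos h1 (2*r)
      have := Real.rpow_pos_of_pos h2 (1-2*r)
      positivity
    have hApos : 0 ≤ A := by
      apply mul_nonneg (by positivity)
      apply Finset.sum_nonneg
      intro i _
      positivity
    have hTnn : 0 ≤ (A / D) ^ (1/(2*r)) := Real.rpow_nonneg (by positivity) _
    rcases le_or_gt d 0 with hd0 | hd0
    · have : (1 / (j : ℝ)) * ∑ i ∈ Finset.Icc 1 j, x i ≤ xbar := by
        rw [hd] at hd0; linarith
      linarith
    · -- main case: d > 0
      -- sums of deviations
      have hsum1 : ∑ i ∈ Finset.Icc 1 j, y i = (j:ℝ) * d := by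
        rw [hd]
        simp only [hy, Finset.sum_sub_distrib, Finset.sum_const, Nat.card_Icc]
        simp [nsmul_eq_mul]
        field_simp
      have hsumall : ∑ i ∈ Finset.Icc 1 n, y i = 0 := by
        simp only [hy, Finset.sum_sub_distrib, Finset.sum_const, Nat.card_Icc]
        simp [nsmul_eq_mul]
        rw [hxbar]
        field_simp
        simp
      have hsplit : ∑ i ∈ Finset.Icc 1 n, y i =
          (∑ i ∈ Finset.Icc 1 j, y i) + ∑ i ∈ Finset.Icc (j+1) n, y i := by
        rw [show Finset.Icc 1 j = Finset.Ioc 0 j from rfl,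
            Finset.Icc_add_one_left_eq_Ioc j n,
            show Finset.Icc 1 n = Finset.Ioc 0 n from rfl]
        exact (Finset.sum_Ioc_consecutive _ (Nat.zero_le j) hjn'.le).symm
      have hsum2 : ∑ i ∈ Finset.Icc (j+1) n, y i = -((j:ℝ) * d) := by
        have := hsplit
        rw [hsumall, hsum1] at this
        linarith
      have hsplitP : ∑ i ∈ Finset.Icc 1 n, |y i| ^ (2*r) =
          (∑ i ∈ Finset.Icc 1 j, |y i| ^ (2*r)) + ∑ i ∈ Finset.Icc (j+1) n, |y i| ^ (2*r) := by
        rw [show Finset.Icc 1 j = Finset.Ioc 0 j from rfl,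
            Finset.Icc_add_one_left_eq_Ioc j n,
            show Finset.Icc 1 n = Finset.Ioc 0 n from rfl]
        exact (Finset.sum_Ioc_consecutive _ (Nat.zero_le j) hjn'.le).symm
      -- power mean on first block
      have hne1 : (Finset.Icc 1 j).Nonempty := by
        exact Finset.nonempty_Icc.mpr hj
      have hne2 : (Finset.Icc (j+1) n).Nonempty := by
        exact Finset.nonempty_Icc.mpr (by omega)
      have hcard1 : ((Finset.Icc 1 j).card : ℝ) = j := by
        rw [Nat.card_Icc]; simp
      have hcard2 : ((Finset.Icc (j+1) n).card : ℝ) = (n:ℝ) - j := by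
        rw [Nat.card_Icc]
        have : n + 1 - (j + 1) = n - j := by omega
        rw [this]
        push_cast [Nat.cast_sub hjn'.le]
        ring
      have hb1 : (j:ℝ) * d ^ (2*r) ≤ ∑ i ∈ Finset.Icc 1 j, |y i| ^ (2*r) := by
        have := pm_key (Finset.Icc 1 j) y (2*r) hp hne1
        have heq : |(j:ℝ)*d| / (j:ℝ) = d := by
          rw [abs_of_pos (by positivity : (0:ℝ) < (j:ℝ)*d)]
          field_simp
        rwa [hcard1, hsum1, heq] at this
      have hb2 : ((n:ℝ) - j) * ((j:ℝ) * d / ((n:ℝ) - j)) ^ (2*r) ≤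
          ∑ i ∈ Finset.Icc (j+1) n, |y i| ^ (2*r) := by
        have := pm_key (Finset.Icc (j+1) n) y (2*r) hp hne2
        rwa [hcard2, hsum2, abs_neg, abs_of_pos (by positivity : (0:ℝ) < (j:ℝ)*d)] at this
      -- main estimate
      have hmain : d ^ (2*r) * D ≤ A := by
        have hDeq : d ^ (2*r) * D =
            (1/(n:ℝ)) * ((j:ℝ) * d ^ (2*r) +
              ((n:ℝ) - j) * ((j:ℝ) * d / ((n:ℝ) - j)) ^ (2*r)) := by
          rw [hD]
          have e1 : ((j:ℝ)/n) ^ (2*r) = (j:ℝ)^(2*r) / (n:ℝ)^(2*r) :=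
            Real.div_rpow hjpos.le hnpos.le _
          have e2 : (1 - (j:ℝ)/n) = ((n:ℝ)-j)/n := by field_simp
          have e3 : (1 - (j:ℝ)/n) ^ (1-2*r) =
              ((n:ℝ)-j)^(1-2*r) / (n:ℝ)^(1-2*r) := by
            rw [e2]; exact Real.div_rpow hnj.le hnpos.le _
          have e4 : ((n:ℝ)-j)^(1-2*r) = ((n:ℝ)-j) / ((n:ℝ)-j)^(2*r) := by
            rw [Real.rpow_sub hnj, Real.rpow_one]
          have e5 : ((n:ℝ))^(1-2*r) = ((n:ℝ)) / ((n:ℝ))^(2*r) := by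
            rw [Real.rpow_sub hnpos, Real.rpow_one]
          have e6 : ((j:ℝ) * d / ((n:ℝ)-j)) ^ (2*r) =
              (j:ℝ)^(2*r) * d^(2*r) / ((n:ℝ)-j)^(2*r) := by
            rw [Real.div_rpow (by positivity) hnj.le,
              Real.mul_rpow hjpos.le hd0.le]
          rw [e1, e3, e4, e5, e6]
          have p1 : (0:ℝ) < (n:ℝ)^(2*r) := Real.rpow_pos_of_pos hnpos _
          have p2 : (0:ℝ) < ((n:ℝ)-j)^(2*r) := Real.rpow_pos_of_pos hnj _
          field_simp
        rw [hDeq, hA]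
        have : ((j:ℝ) * d ^ (2*r) + ((n:ℝ) - j) * ((j:ℝ) * d / ((n:ℝ) - j)) ^ (2*r))
            ≤ ∑ i ∈ Finset.Icc 1 n, |x i - xbar| ^ (2*r) := by
          have : ∑ i ∈ Finset.Icc 1 n, |x i - xbar| ^ (2*r)
              = ∑ i ∈ Finset.Icc 1 n, |y i| ^ (2*r) := rfl
          rw [this, hsplitP]
          exact add_le_add hb1 hb2
        have hninv : (0:ℝ) < 1/(n:ℝ) := by positivity
        nlinarith
      -- conclude
      have hdle : d ≤ (A / D) ^ (1/(2*r)) := by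
        have h1 : d ^ (2*r) ≤ A / D := (le_div_iff₀ hDpos).mpr hmain
        have h2 : (d ^ (2*r)) ^ (1/(2*r)) ≤ (A / D) ^ (1/(2*r)) :=
          Real.rpow_le_rpow (by positivity) h1 (by positivity)
        rwa [← Real.rpow_mul hd0.le,
          mul_one_div, div_self hppos.ne', Real.rpow_one] at h2
      rw [hd] at hdle
      linarith
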